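/- Let p be a prime, n ≥ 1, q = p^n, G = SL₂(GF(q)), V = GF(q)² the natural module, and S a Sylow p-subgroup of G. Then for every nonidentity element s ∈ S and every v ∈ V \ C_V(S), the following subsets of V coincide: C_V(s) = C_V(S) = [V,S] = [V,s] = {g·v − v : g ∈ S}. -/

import Mathlib

open Matrix

section Aux
variable {K : Type*} [Field K]

lemma SL2Aux.ch2 (N : Matrix (Fin 2) (Fin 2) K) :
    N * N = N.trace • N - N.det • (1 : Matrix (Fin 2) (Fin 2) K) := by
  ext i j
  fin_cases i <;> fin_cases j <;>
    simp [Matrix.mul_apply, Matrix.trace, Matrix.det_fin_two, Fin.sum_univ_two,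
      Matrix.one_apply] <;> ring

lemma SL2Aux.nilp_sq (N : Matrix (Fin 2) (Fin 2) K) (hN : N ≠ 0) {m : ℕ} (hm : 0 < m)
    (h : N ^ m = 0) : N * N = 0 ∧ N.trace = 0 ∧ N.det = 0 := by
  have hdet : N.det = 0 := by
    have h2 : N.det ^ m = 0 := by rw [← Matrix.det_pow, h]; simp
    exact pow_eq_zero_iff hm.ne' |>.mp h2
  have hsq : N * N = N.trace • N := by rw [SL2Aux.ch2, hdet, zero_smul, sub_zero]
  have hpow : ∀ k : ℕ, N ^ (k + 1) = N.trace ^ k • N := by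
    intro k
    induction k with
    | zero => simp
    | succ k ih =>
      rw [pow_succ, ih, Matrix.smul_mul, hsq, smul_smul, ← pow_succ]
  have htr : N.trace = 0 := by
    obtain ⟨m', rfl⟩ : ∃ m', m = m' + 1 := ⟨m - 1, (Nat.succ_pred_eq_of_pos hm).symm⟩
    have := hpow m'
    rw [h] at this
    by_contra htr
    exact hN (by
      have := congrArg (fun M => (N.trace ^ m')⁻¹ • M) this.symm
      simpa [smul_smul, inv_mul_cancel₀ (pow_ne_zero m' htr)] using this)
  exact ⟨by rw [hsq, htr, zero_smul], htr, hdet⟩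

lemma SL2Aux.fixline (N : Matrix (Fin 2) (Fin 2) K) (hN : N ≠ 0) (h2 : N * N = 0)
    {w₀ : Fin 2 → K} (hw0 : w₀ ≠ 0) (hker : N.mulVec w₀ = 0) :
    LinearMap.ker N.mulVecLin = Submodule.span K {w₀} ∧
    LinearMap.range N.mulVecLin = Submodule.span K {w₀} := by
  set f := N.mulVecLin with hf
  have hrk : LinearMap.range f ≤ LinearMap.ker f := by
    rintro x ⟨u, rfl⟩
    show f (f u) = 0
    simp only [hf, Matrix.mulVecLin_apply, Matrix.mulVec_mulVec, h2, Matrix.zero_mulVec]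
  have hf0 : f ≠ 0 := by
    intro h0
    apply hN
    ext i j
    have h1 : N.mulVec (Pi.single j 1) = 0 := congrFun (congrArg DFunLike.coe h0) _
    have := congrFun h1 i
    simpa using this
  have hsum : Module.finrank K (LinearMap.range f) + Module.finrank K (LinearMap.ker f) = 2 := by
    have := LinearMap.finrank_range_add_finrank_ker f
    rwa [Module.finrank_fin_fun] at this
  have hr1 : 1 ≤ Module.finrank K (LinearMap.range f) := by
    rcases Nat.eq_zero_or_pos (Module.finrank K (LinearMap.range f)) with h | h
    · exact absurd (LinearMap.range_eq_bot.mp (Submodule.finrank_eq_zero.mp h)) hf0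
    · exact h
  have hspan_le : Submodule.span K {w₀} ≤ LinearMap.ker f := by
    rw [Submodule.span_le, Set.singleton_subset_iff]
    exact hker
  have hspan1 : Module.finrank K (Submodule.span K ({w₀} : Set (Fin 2 → K))) = 1 :=
    finrank_span_singleton hw0
  have hrle : Module.finrank K (LinearMap.range f) ≤ Module.finrank K (LinearMap.ker f) :=
    Submodule.finrank_mono hrk
  have hk1 : Module.finrank K (LinearMap.ker f) = 1 := by omega
  have hkspan : Submodule.span K {w₀} = LinearMap.ker f :=
    Submodule.eq_of_le_of_finrank_le hspan_le (by omega)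
  have hrspan : LinearMap.range f = Submodule.span K {w₀} :=
    Submodule.eq_of_le_of_finrank_le (hkspan ▸ hrk) (by omega)
  exact ⟨hkspan.symm, hrspan⟩

end Aux

open Matrix.SpecialLinearGroup in
theorem SL2Aux.main {p : ℕ} [Fact p.Prime] {K : Type*} [Field K] [Finite K] [CharP K p]
    (S : Sylow p (Matrix.SpecialLinearGroup (Fin 2) K))
    (s : Matrix.SpecialLinearGroup (Fin 2) K)
    (hs : s ∈ (S : Subgroup (Matrix.SpecialLinearGroup (Fin 2) K))) (hs1 : s ≠ 1)
    (v : Fin 2 → K)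
    (hv : ¬ ∀ t ∈ (S : Subgroup (Matrix.SpecialLinearGroup (Fin 2) K)),
      Matrix.mulVec (t : Matrix (Fin 2) (Fin 2) K) v = v) :
    ∃ w₀ : Fin 2 → K,
    ({w : Fin 2 → K | Matrix.mulVec (s : Matrix (Fin 2) (Fin 2) K) w = w}
        = (Submodule.span K {w₀} : Submodule K (Fin 2 → K))) ∧
    ({w : Fin 2 → K | ∀ t ∈ (S : Subgroup (Matrix.SpecialLinearGroup (Fin 2) K)),
          Matrix.mulVec (t : Matrix (Fin 2) (Fin 2) K) w = w}
        = (Submodule.span K {w₀} : Submodule K (Fin 2 → K))) ∧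
    ((AddSubgroup.closure {w : Fin 2 → K |
          ∃ t ∈ (S : Subgroup (Matrix.SpecialLinearGroup (Fin 2) K)),
            ∃ u : Fin 2 → K, w = Matrix.mulVec (t : Matrix (Fin 2) (Fin 2) K) u - u} :
        Set (Fin 2 → K)) = (Submodule.span K {w₀} : Submodule K (Fin 2 → K))) ∧
    ((AddSubgroup.closure {w : Fin 2 → K |
          ∃ t ∈ Subgroup.zpowers s,
            ∃ u : Fin 2 → K, w = Matrix.mulVec (t : Matrix (Fin 2) (Fin 2) K) u - u} :
        Set (Fin 2 → K)) = (Submodule.span K {w₀} : Submodule K (Fin 2 → K))) ∧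
    ({w : Fin 2 → K |
          ∃ g ∈ (S : Subgroup (Matrix.SpecialLinearGroup (Fin 2) K)),
            w = Matrix.mulVec (g : Matrix (Fin 2) (Fin 2) K) v - v}
        = (Submodule.span K {w₀} : Submodule K (Fin 2 → K))) := by
  classical
  have coe_inj : Function.Injective
      (fun A : Matrix.SpecialLinearGroup (Fin 2) K => (A : Matrix (Fin 2) (Fin 2) K)) :=
    Subtype.coe_injective
  -- p-power orders
  have pMem : ∀ t ∈ (S : Subgroup (Matrix.SpecialLinearGroup (Fin 2) K)),
      ∃ k : ℕ, t ^ p ^ k = 1 := by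
    intro t ht
    obtain ⟨k, hk⟩ := S.isPGroup' ⟨t, ht⟩
    exact ⟨k, by simpa using congrArg Subtype.val hk⟩
  -- unipotency
  have unip : ∀ t ∈ (S : Subgroup (Matrix.SpecialLinearGroup (Fin 2) K)),
      ((t : Matrix (Fin 2) (Fin 2) K) - 1) * ((t : Matrix (Fin 2) (Fin 2) K) - 1) = 0 := by
    intro t ht
    by_cases h1 : (t : Matrix (Fin 2) (Fin 2) K) - 1 = 0
    · rw [h1, mul_zero]
    · obtain ⟨k, hk⟩ := pMem t ht
      have hnil : ((t : Matrix (Fin 2) (Fin 2) K) - 1) ^ p ^ k = 0 := by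
        rw [sub_pow_char_pow_of_commute _ _ (Commute.one_right _), one_pow,
          ← Matrix.SpecialLinearGroup.coe_pow, hk, Matrix.SpecialLinearGroup.coe_one, sub_self]
      exact (SL2Aux.nilp_sq _ h1 (pow_pos (Fact.out : p.Prime).pos k) hnil).1
  -- a nontrivial central element of S
  haveI : Nontrivial (↥(S : Subgroup (Matrix.SpecialLinearGroup (Fin 2) K))) :=
    ⟨⟨⟨s, hs⟩, 1, fun h => hs1 (by simpa using congrArg Subtype.val h)⟩⟩
  haveI := IsPGroup.center_nontrivial S.isPGroup'
  obtain ⟨zc, hzc1⟩ := exists_ne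
    (1 : ↥(Subgroup.center ↥(S : Subgroup (Matrix.SpecialLinearGroup (Fin 2) K))))
  set z : Matrix.SpecialLinearGroup (Fin 2) K := zc.1.1 with hzdef
  have hzS : z ∈ (S : Subgroup (Matrix.SpecialLinearGroup (Fin 2) K)) := zc.1.2
  have hz1 : z ≠ 1 := by
    intro h
    apply hzc1
    apply Subtype.ext
    apply Subtype.ext
    exact hzdef ▸ h
  have hzcomm : ∀ t ∈ (S : Subgroup (Matrix.SpecialLinearGroup (Fin 2) K)), z * t = t * z := by
    intro t ht
    have h0 := (Subgroup.mem_center_iff.mp zc.2) ⟨t, ht⟩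
    have h1 := congrArg Subtype.val h0
    simpa [hzdef] using h1.symm
  -- the common fixed vector w₀
  set Mz : Matrix (Fin 2) (Fin 2) K := (z : Matrix (Fin 2) (Fin 2) K) - 1 with hMzdef
  have hMz0 : Mz ≠ 0 := by
    intro h
    exact hz1 (coe_inj (by rw [sub_eq_zero] at h; simpa using h))
  have hMz2 : Mz * Mz = 0 := unip z hzS
  have hex : ∃ u, Mz.mulVec u ≠ 0 := by
    by_contra h
    push_neg at h
    apply hMz0
    ext i j
    simpa using congrFun (h (Pi.single j 1)) i
  obtain ⟨u₀, hu₀⟩ := hex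
  set w₀ := Mz.mulVec u₀ with hw₀def
  have hw₀0 : w₀ ≠ 0 := hu₀
  have hw₀ker : Mz.mulVec w₀ = 0 := by
    rw [hw₀def, Matrix.mulVec_mulVec, hMz2, Matrix.zero_mulVec]
  obtain ⟨hzker, hzrange⟩ := SL2Aux.fixline Mz hMz0 hMz2 hw₀0 hw₀ker
  refine ⟨w₀, ?_⟩
  -- iterated action on w₀
  have pow_smul : ∀ (t : Matrix.SpecialLinearGroup (Fin 2) K) (c : K),
      (t : Matrix (Fin 2) (Fin 2) K).mulVec w₀ = c • w₀ →
      ∀ m : ℕ, ((t ^ m : Matrix.SpecialLinearGroup (Fin 2) K) :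
        Matrix (Fin 2) (Fin 2) K).mulVec w₀ = c ^ m • w₀ := by
    intro t c h m
    induction m with
    | zero => simp [Matrix.SpecialLinearGroup.coe_one, Matrix.one_mulVec]
    | succ m ih =>
      rw [pow_succ, Matrix.SpecialLinearGroup.coe_mul, ← Matrix.mulVec_mulVec, h,
        Matrix.mulVec_smul, ih, smul_smul, ← pow_succ']
  -- every element of S fixes w₀
  have hfix : ∀ t ∈ (S : Subgroup (Matrix.SpecialLinearGroup (Fin 2) K)),
      (t : Matrix (Fin 2) (Fin 2) K).mulVec w₀ = w₀ := by
    intro t ht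
    have hcm : Mz * (t : Matrix (Fin 2) (Fin 2) K)
        = (t : Matrix (Fin 2) (Fin 2) K) * Mz := by
      rw [hMzdef, sub_mul, mul_sub, one_mul, mul_one,
        ← Matrix.SpecialLinearGroup.coe_mul, ← Matrix.SpecialLinearGroup.coe_mul,
        hzcomm t ht]
    have hmem : (t : Matrix (Fin 2) (Fin 2) K).mulVec w₀
        ∈ LinearMap.ker Mz.mulVecLin := by
      show Mz.mulVec ((t : Matrix (Fin 2) (Fin 2) K).mulVec w₀) = 0
      rw [Matrix.mulVec_mulVec, hcm, ← Matrix.mulVec_mulVec, hw₀ker, Matrix.mulVec_zero]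
    rw [hzker] at hmem
    obtain ⟨c, hc⟩ := Submodule.mem_span_singleton.mp hmem
    obtain ⟨k, hk⟩ := pMem t ht
    have hpow := pow_smul t c hc.symm (p ^ k)
    rw [hk, Matrix.SpecialLinearGroup.coe_one, Matrix.one_mulVec] at hpow
    have hc1 : c ^ p ^ k = 1 := by
      by_contra hne
      have h3 : (c ^ p ^ k - 1) • w₀ = 0 := by
        rw [sub_smul, one_smul, ← hpow, sub_self]
      rcases smul_eq_zero.mp h3 with h | h
      · exact hne (by linear_combination h)
      · exact hw₀0 h
    have hc2 : (c - 1) ^ p ^ k = 0 := by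
      rw [sub_pow_char_pow, hc1, one_pow, sub_self]
    have hc3 : c = 1 := by
      have := pow_eq_zero_iff (pow_ne_zero k (Fact.out : p.Prime).pos.ne') |>.mp hc2
      linear_combination this
    rw [← hc, hc3, one_smul]
  -- common line for every nontrivial element
  have lines : ∀ t ∈ (S : Subgroup (Matrix.SpecialLinearGroup (Fin 2) K)), t ≠ 1 →
      LinearMap.ker ((t : Matrix (Fin 2) (Fin 2) K) - 1).mulVecLin = Submodule.span K {w₀} ∧
      LinearMap.range ((t : Matrix (Fin 2) (Fin 2) K) - 1).mulVecLin
        = Submodule.span K {w₀} := by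
    intro t ht ht1
    refine SL2Aux.fixline _ (fun h => ht1 (coe_inj (by rw [sub_eq_zero] at h; simpa using h)))
      (unip t ht) hw₀0 ?_
    rw [Matrix.sub_mulVec, Matrix.one_mulVec, hfix t ht, sub_self]
  -- v is not on the line
  have hvnot : v ∉ Submodule.span K ({w₀} : Set (Fin 2 → K)) := by
    intro hvmem
    apply hv
    intro t ht
    obtain ⟨c, hc⟩ := Submodule.mem_span_singleton.mp hvmem
    rw [← hc, Matrix.mulVec_smul, hfix t ht]
  -- membership criterion for the line
  have span_mem : ∀ u : Fin 2 → K, w₀ 1 * u 0 - w₀ 0 * u 1 = 0 →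
      u ∈ Submodule.span K ({w₀} : Set (Fin 2 → K)) := by
    intro u hrel
    have hcases : w₀ 0 ≠ 0 ∨ w₀ 1 ≠ 0 := by
      by_contra h
      push_neg at h
      apply hw₀0
      ext i
      fin_cases i <;> simp [h.1, h.2]
    rcases hcases with h | h
    · refine Submodule.mem_span_singleton.mpr ⟨u 0 / w₀ 0, ?_⟩
      ext i
      fin_cases i
      · simp only [Pi.smul_apply, smul_eq_mul, Fin.zero_eta, Fin.mk_one, Fin.isValue]
        field_simp
      · simp only [Pi.smul_apply, smul_eq_mul, Fin.zero_eta, Fin.mk_one, Fin.isValue]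
        field_simp
        linear_combination hrel
    · refine Submodule.mem_span_singleton.mpr ⟨u 1 / w₀ 1, ?_⟩
      ext i
      fin_cases i
      · simp only [Pi.smul_apply, smul_eq_mul, Fin.zero_eta, Fin.mk_one, Fin.isValue]
        field_simp
        linear_combination -hrel
      · simp only [Pi.smul_apply, smul_eq_mul, Fin.zero_eta, Fin.mk_one, Fin.isValue]
        field_simp
  -- the full stabilizer of w₀ is a p-group containing S, hence equals S
  set T : Subgroup (Matrix.SpecialLinearGroup (Fin 2) K) :=
    { carrier := {A : Matrix.SpecialLinearGroup (Fin 2) K |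
        (A : Matrix (Fin 2) (Fin 2) K).mulVec w₀ = w₀}
      mul_mem' := by
        intro a b ha hb
        show ((a * b : Matrix.SpecialLinearGroup (Fin 2) K) :
          Matrix (Fin 2) (Fin 2) K).mulVec w₀ = w₀
        rw [Matrix.SpecialLinearGroup.coe_mul, ← Matrix.mulVec_mulVec, hb, ha]
      one_mem' := by
        show ((1 : Matrix.SpecialLinearGroup (Fin 2) K) :
          Matrix (Fin 2) (Fin 2) K).mulVec w₀ = w₀
        rw [Matrix.SpecialLinearGroup.coe_one, Matrix.one_mulVec]
      inv_mem' := by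
        intro a ha
        show ((a⁻¹ : Matrix.SpecialLinearGroup (Fin 2) K) :
          Matrix (Fin 2) (Fin 2) K).mulVec w₀ = w₀
        conv_lhs => rw [← ha]
        rw [Matrix.mulVec_mulVec, ← Matrix.SpecialLinearGroup.coe_mul, inv_mul_cancel,
          Matrix.SpecialLinearGroup.coe_one, Matrix.one_mulVec] } with hTdef
  have hST : (S : Subgroup (Matrix.SpecialLinearGroup (Fin 2) K)) ≤ T := fun t ht => hfix t ht
  have hTp : IsPGroup p T := by
    intro A
    refine ⟨1, ?_⟩
    have hA : ((A : Matrix.SpecialLinearGroup (Fin 2) K) :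
        Matrix (Fin 2) (Fin 2) K).mulVec w₀ = w₀ := A.2
    set B := ((A : Matrix.SpecialLinearGroup (Fin 2) K) : Matrix (Fin 2) (Fin 2) K) with hBdef
    have hdetB : B.det = 1 := (A : Matrix.SpecialLinearGroup (Fin 2) K).2
    have hCH : B * B = B.trace • B - (1 : Matrix (Fin 2) (Fin 2) K) := by
      rw [SL2Aux.ch2, hdetB, one_smul]
    have htr : B.trace = 2 := by
      have h2 : (B * B).mulVec w₀ = w₀ := by rw [← Matrix.mulVec_mulVec, hA, hA]
      rw [hCH, Matrix.sub_mulVec, Matrix.one_mulVec] at h2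
      have h3 : (B.trace • B).mulVec w₀ = B.trace • w₀ := by
        rw [Matrix.smul_mulVec, hA]
      rw [h3] at h2
      have h4 : (B.trace - 2) • w₀ = 0 := by
        rw [sub_eq_iff_eq_add] at h2
        rw [sub_smul, h2, two_smul]
        abel
      rcases smul_eq_zero.mp h4 with h | h
      · linear_combination h
      · exact absurd h hw₀0
    have hMB : (B - 1) * (B - 1) = 0 := by
      have hnc : (B - 1) * (B - 1) = B * B - B - B + 1 := by noncomm_ring
      rw [hnc, hCH, htr, two_smul]
      abel
    have hBp : B ^ p = 1 := by
      have hp2 : 2 ≤ p := (Fact.out : p.Prime).two_le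
      have hB1 : B = 1 + (B - 1) := by abel
      rw [hB1, add_pow_char_of_commute p (Commute.one_left _), one_pow]
      have hz : (B - 1) ^ p = 0 := by
        have hsplit : (B - 1) ^ p = (B - 1) ^ (p - 2) * ((B - 1) * (B - 1)) := by
          rw [← pow_two, ← pow_add]
          congr 1
          omega
        rw [hsplit, hMB, mul_zero]
      rw [hz, add_zero]
    have hApG : (A : Matrix.SpecialLinearGroup (Fin 2) K) ^ p = 1 := by
      apply coe_inj
      show (((A : Matrix.SpecialLinearGroup (Fin 2) K) ^ p :
        Matrix.SpecialLinearGroup (Fin 2) K) : Matrix (Fin 2) (Fin 2) K) = _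
      rw [Matrix.SpecialLinearGroup.coe_pow, ← hBdef, hBp]
      rfl
    apply Subtype.ext
    rw [pow_one]
    simpa using hApG
  have hTS : T = (S : Subgroup (Matrix.SpecialLinearGroup (Fin 2) K)) :=
    S.is_maximal' hTp hST
  -- surjectivity of g ↦ g v - v onto the line
  have hd0 : w₀ 1 * v 0 - w₀ 0 * v 1 ≠ 0 := by
    intro h
    exact hvnot (span_mem v h)
  have hdinv : (w₀ 1 * v 0 - w₀ 0 * v 1)⁻¹ * (w₀ 1 * v 0 - w₀ 0 * v 1) = 1 :=
    inv_mul_cancel₀ hd0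
  have hsurj : ∀ w ∈ Submodule.span K ({w₀} : Set (Fin 2 → K)),
      ∃ g ∈ (S : Subgroup (Matrix.SpecialLinearGroup (Fin 2) K)),
        (g : Matrix (Fin 2) (Fin 2) K).mulVec v - v = w := by
    intro w hw
    obtain ⟨c, hc⟩ := Submodule.mem_span_singleton.mp hw
    have hw0' : w 0 = c * w₀ 0 := (congrFun hc (0 : Fin 2)).symm
    have hw1' : w 1 = c * w₀ 1 := (congrFun hc (1 : Fin 2)).symm
    set φ0 : K := (w₀ 1 * v 0 - w₀ 0 * v 1)⁻¹ * w₀ 1 with hφ0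
    set φ1 : K := -((w₀ 1 * v 0 - w₀ 0 * v 1)⁻¹ * w₀ 0) with hφ1
    set A : Matrix (Fin 2) (Fin 2) K :=
      !![1 + w 0 * φ0, w 0 * φ1; w 1 * φ0, 1 + w 1 * φ1] with hAdef
    have hdet : A.det = 1 := by
      rw [hAdef, Matrix.det_fin_two_of, hφ0, hφ1, hw0', hw1']
      ring
    set g : Matrix.SpecialLinearGroup (Fin 2) K := ⟨A, hdet⟩ with hgdef
    have hgT : g ∈ T := by
      show (g : Matrix (Fin 2) (Fin 2) K).mulVec w₀ = w₀
      ext i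
      fin_cases i <;>
        simp [hgdef, hAdef, Matrix.mulVec, dotProduct, Fin.sum_univ_two,
          hφ0, hφ1, hw0', hw1'] <;> ring
    refine ⟨g, hTS ▸ hgT, ?_⟩
    have hAv : A.mulVec v - v = w := by
      ext i
      fin_cases i <;>
        simp [hAdef, Matrix.mulVec, dotProduct, Fin.sum_univ_two, hφ0, hφ1]
      · linear_combination (w 0) * hdinv
      · linear_combination (w 1) * hdinv
    exact hAv
  -- the five descriptions of the line
  have E1 : {w : Fin 2 → K | Matrix.mulVec (s : Matrix (Fin 2) (Fin 2) K) w = w}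
      = (Submodule.span K ({w₀} : Set (Fin 2 → K)) : Set (Fin 2 → K)) := by
    ext w
    simp only [Set.mem_setOf_eq, SetLike.mem_coe]
    rw [← (lines s hs hs1).1]
    simp only [LinearMap.mem_ker, Matrix.mulVecLin_apply, Matrix.sub_mulVec,
      Matrix.one_mulVec, sub_eq_zero]
  have E2 : {w : Fin 2 → K | ∀ t ∈ (S : Subgroup (Matrix.SpecialLinearGroup (Fin 2) K)),
        Matrix.mulVec (t : Matrix (Fin 2) (Fin 2) K) w = w}
      = (Submodule.span K ({w₀} : Set (Fin 2 → K)) : Set (Fin 2 → K)) := by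
    ext w
    simp only [Set.mem_setOf_eq, SetLike.mem_coe]
    constructor
    · intro h
      have := h s hs
      have h2 : w ∈ {w : Fin 2 → K | Matrix.mulVec (s : Matrix (Fin 2) (Fin 2) K) w = w} := this
      rw [E1] at h2
      exact h2
    · intro h t ht
      obtain ⟨c, hc⟩ := Submodule.mem_span_singleton.mp h
      rw [← hc, Matrix.mulVec_smul, hfix t ht]
  have hrangeS : ∀ u : Fin 2 → K,
      Matrix.mulVec ((s : Matrix (Fin 2) (Fin 2) K)) u - u ∈ Submodule.span K ({w₀} : Set (Fin 2 → K)) := by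
    intro u
    rw [← (lines s hs hs1).2]
    exact ⟨u, by simp [Matrix.mulVecLin_apply, Matrix.sub_mulVec, Matrix.one_mulVec]⟩
  have hmemline : ∀ t ∈ (S : Subgroup (Matrix.SpecialLinearGroup (Fin 2) K)), ∀ u : Fin 2 → K,
      Matrix.mulVec ((t : Matrix (Fin 2) (Fin 2) K)) u - u
        ∈ Submodule.span K ({w₀} : Set (Fin 2 → K)) := by
    intro t ht u
    by_cases ht1 : t = 1
    · subst ht1
      simp only [Matrix.SpecialLinearGroup.coe_one, Matrix.one_mulVec, sub_self]
      exact Submodule.zero_mem _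
    · rw [← (lines t ht ht1).2]
      exact ⟨u, by simp [Matrix.mulVecLin_apply, Matrix.sub_mulVec, Matrix.one_mulVec]⟩
  have hlineexp : ∀ w ∈ Submodule.span K ({w₀} : Set (Fin 2 → K)),
      ∃ u : Fin 2 → K, w = Matrix.mulVec ((s : Matrix (Fin 2) (Fin 2) K)) u - u := by
    intro w hw
    rw [← (lines s hs hs1).2] at hw
    obtain ⟨u, hu⟩ := hw
    exact ⟨u, by rw [← hu]; simp [Matrix.mulVecLin_apply, Matrix.sub_mulVec, Matrix.one_mulVec]⟩
  have E3 : (AddSubgroup.closure {w : Fin 2 → K |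
        ∃ t ∈ (S : Subgroup (Matrix.SpecialLinearGroup (Fin 2) K)),
          ∃ u : Fin 2 → K, w = Matrix.mulVec (t : Matrix (Fin 2) (Fin 2) K) u - u} :
      Set (Fin 2 → K)) = (Submodule.span K ({w₀} : Set (Fin 2 → K)) : Set (Fin 2 → K)) := by
    apply subset_antisymm
    · have hle : AddSubgroup.closure {w : Fin 2 → K |
          ∃ t ∈ (S : Subgroup (Matrix.SpecialLinearGroup (Fin 2) K)),
            ∃ u : Fin 2 → K, w = Matrix.mulVec (t : Matrix (Fin 2) (Fin 2) K) u - u}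
          ≤ (Submodule.span K ({w₀} : Set (Fin 2 → K))).toAddSubgroup := by
        apply AddSubgroup.closure_le _ |>.mpr
        rintro w ⟨t, ht, u, rfl⟩
        exact hmemline t ht u
      exact fun x hx => hle hx
    · intro w hw
      obtain ⟨u, hu⟩ := hlineexp w hw
      exact AddSubgroup.subset_closure ⟨s, hs, u, hu⟩
  have E4 : (AddSubgroup.closure {w : Fin 2 → K |
        ∃ t ∈ Subgroup.zpowers s,
          ∃ u : Fin 2 → K, w = Matrix.mulVec (t : Matrix (Fin 2) (Fin 2) K) u - u} :
      Set (Fin 2 → K)) = (Submodule.span K ({w₀} : Set (Fin 2 → K)) : Set (Fin 2 → K)) := by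
    apply subset_antisymm
    · have hle : AddSubgroup.closure {w : Fin 2 → K |
          ∃ t ∈ Subgroup.zpowers s,
            ∃ u : Fin 2 → K, w = Matrix.mulVec (t : Matrix (Fin 2) (Fin 2) K) u - u}
          ≤ (Submodule.span K ({w₀} : Set (Fin 2 → K))).toAddSubgroup := by
        apply AddSubgroup.closure_le _ |>.mpr
        rintro w ⟨t, htz, u, rfl⟩
        exact hmemline t (Subgroup.zpowers_le.mpr hs htz) u
      exact fun x hx => hle hx
    · intro w hw
      obtain ⟨u, hu⟩ := hlineexp w hw
      exact AddSubgroup.subset_closure ⟨s, Subgroup.mem_zpowers s, u, hu⟩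
  have E5 : {w : Fin 2 → K |
        ∃ g ∈ (S : Subgroup (Matrix.SpecialLinearGroup (Fin 2) K)),
          w = Matrix.mulVec (g : Matrix (Fin 2) (Fin 2) K) v - v}
      = (Submodule.span K ({w₀} : Set (Fin 2 → K)) : Set (Fin 2 → K)) := by
    ext w
    simp only [Set.mem_setOf_eq, SetLike.mem_coe]
    constructor
    · rintro ⟨g, hg, rfl⟩
      exact hmemline g hg v
    · intro hw
      obtain ⟨g, hgS, hgw⟩ := hsurj w hw
      exact ⟨g, hgS, hgw.symm⟩
  exact ⟨E1, E2, E3, E4, E5⟩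

/-- Let `p` be a prime, `q = p ^ n` with `n ≥ 1`, `G = SL₂(GF(q))` acting on its natural module
`V = GF(q)²`, and `S ∈ Syl_p(G)`. For every nonidentity `s ∈ S` and every `v ∈ V \ C_V(S)`,
the following subsets of `V` coincide:
`C_V(s) = C_V(S) = [V, S] = [V, s] = {g • v - v : g ∈ S}`. -/
theorem sl2_natural_module_centralizers (p n : ℕ) [Fact p.Prime] (hn : 1 ≤ n)
    (S : Sylow p (Matrix.SpecialLinearGroup (Fin 2) (GaloisField p n)))
    (s : Matrix.SpecialLinearGroup (Fin 2) (GaloisField p n))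
    (hs : s ∈ (S : Subgroup (Matrix.SpecialLinearGroup (Fin 2) (GaloisField p n))))
    (hs1 : s ≠ 1) (v : Fin 2 → GaloisField p n)
    (hv : ¬ ∀ t ∈ (S : Subgroup (Matrix.SpecialLinearGroup (Fin 2) (GaloisField p n))),
      Matrix.mulVec (t : Matrix (Fin 2) (Fin 2) (GaloisField p n)) v = v) :
    {w : Fin 2 → GaloisField p n |
        Matrix.mulVec (s : Matrix (Fin 2) (Fin 2) (GaloisField p n)) w = w}
      = {w : Fin 2 → GaloisField p n |
          ∀ t ∈ (S : Subgroup (Matrix.SpecialLinearGroup (Fin 2) (GaloisField p n))),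
            Matrix.mulVec (t : Matrix (Fin 2) (Fin 2) (GaloisField p n)) w = w} ∧
    {w : Fin 2 → GaloisField p n |
        ∀ t ∈ (S : Subgroup (Matrix.SpecialLinearGroup (Fin 2) (GaloisField p n))),
          Matrix.mulVec (t : Matrix (Fin 2) (Fin 2) (GaloisField p n)) w = w}
      = (AddSubgroup.closure {w : Fin 2 → GaloisField p n |
          ∃ t ∈ (S : Subgroup (Matrix.SpecialLinearGroup (Fin 2) (GaloisField p n))),
            ∃ u : Fin 2 → GaloisField p n,
              w = Matrix.mulVec (t : Matrix (Fin 2) (Fin 2) (GaloisField p n)) u - u} :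
          Set (Fin 2 → GaloisField p n)) ∧
    (AddSubgroup.closure {w : Fin 2 → GaloisField p n |
        ∃ t ∈ (S : Subgroup (Matrix.SpecialLinearGroup (Fin 2) (GaloisField p n))),
          ∃ u : Fin 2 → GaloisField p n,
            w = Matrix.mulVec (t : Matrix (Fin 2) (Fin 2) (GaloisField p n)) u - u} :
        Set (Fin 2 → GaloisField p n))
      = (AddSubgroup.closure {w : Fin 2 → GaloisField p n |
          ∃ t ∈ Subgroup.zpowers s, ∃ u : Fin 2 → GaloisField p n,
            w = Matrix.mulVec (t : Matrix (Fin 2) (Fin 2) (GaloisField p n)) u - u} :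
          Set (Fin 2 → GaloisField p n)) ∧
    (AddSubgroup.closure {w : Fin 2 → GaloisField p n |
        ∃ t ∈ Subgroup.zpowers s, ∃ u : Fin 2 → GaloisField p n,
          w = Matrix.mulVec (t : Matrix (Fin 2) (Fin 2) (GaloisField p n)) u - u} :
        Set (Fin 2 → GaloisField p n))
      = {w : Fin 2 → GaloisField p n |
          ∃ g ∈ (S : Subgroup (Matrix.SpecialLinearGroup (Fin 2) (GaloisField p n))),
            w = Matrix.mulVec (g : Matrix (Fin 2) (Fin 2) (GaloisField p n)) v - v} := by
  obtain ⟨w₀, E1, E2, E3, E4, E5⟩ := SL2Aux.main S s hs hs1 v hv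
  exact ⟨E1.trans E2.symm, E2.trans E3.symm, E3.trans E4.symm, E4.trans E5.symm⟩
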